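/- Let f, g : ℝ → ℝ be continuous, ω : ℝ → ℝ, and let x, y : ℝ → ℝ be twice differentiable functions with x(t) ≠ 0 and y(t) ≠ 0 for all t, satisfying the generalized Ermakov system x'' = -ω(t)²x + f(y/x)/(x²y) and y'' = -ω(t)²y + g(x/y)/(xy²). Then the Ermakov invariant I₀(t) = (1/2)(x y' - y x')² + Φ(y(t)/x(t)) + Ψ(x(t)/y(t)) is constant along solutions, where Φ and Ψ are antiderivatives of f and g respectively. -/

import Mathlib

/-- The Ermakov invariant of the 2d generalized Ermakov system is constant. -/
theorem ermakov_invariant_constant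
    (f g ω Φ Ψ x y x' y' : ℝ → ℝ)
    (hf : Continuous f) (hg : Continuous g)
    (hx0 : ∀ t, x t ≠ 0) (hy0 : ∀ t, y t ≠ 0)
    (hx : ∀ t, HasDerivAt x (x' t) t)
    (hy : ∀ t, HasDerivAt y (y' t) t)
    (hx' : ∀ t, HasDerivAt x' (-(ω t)^2 * x t + f (y t / x t) / ((x t)^2 * y t)) t)
    (hy' : ∀ t, HasDerivAt y' (-(ω t)^2 * y t + g (x t / y t) / (x t * (y t)^2)) t)
    (hΦ : ∀ u, HasDerivAt Φ (f u) u)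
    (hΨ : ∀ u, HasDerivAt Ψ (g u) u) :
    ∀ t, deriv (fun s => (1/2) * (x s * y' s - y s * x' s)^2
      + Φ (y s / x s) + Ψ (x s / y s)) t = 0 := by
  intro t
  have hW : HasDerivAt (fun s => x s * y' s - y s * x' s)
      (x t * (-(ω t)^2 * y t + g (x t / y t) / (x t * (y t)^2))
       - y t * (-(ω t)^2 * x t + f (y t / x t) / ((x t)^2 * y t))) t := by
    have h := ((hx t).mul (hy' t)).sub ((hy t).mul (hx' t))
    exact h.congr_deriv (by ring)
  have h1 : HasDerivAt (fun s => (1/2) * (x s * y' s - y s * x' s)^2)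
      ((1/2) * (2 * (x t * y' t - y t * x' t) ^ 1 *
        (x t * (-(ω t)^2 * y t + g (x t / y t) / (x t * (y t)^2))
         - y t * (-(ω t)^2 * x t + f (y t / x t) / ((x t)^2 * y t))))) t :=
    (hW.pow 2).const_mul (1/2)
  have h2 : HasDerivAt (fun s => Φ (y s / x s))
      (f (y t / x t) * ((y' t * x t - y t * x' t) / (x t)^2)) t :=
    (hΦ (y t / x t)).comp t ((hy t).div (hx t) (hx0 t))
  have h3 : HasDerivAt (fun s => Ψ (x s / y s))
      (g (x t / y t) * ((x' t * y t - x t * y' t) / (y t)^2)) t :=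
    (hΨ (x t / y t)).comp t ((hx t).div (hy t) (hy0 t))
  have htot := (h1.add h2).add h3
  rw [show deriv (fun s => (1/2) * (x s * y' s - y s * x' s)^2 + Φ (y s / x s) + Ψ (x s / y s)) t = _ from htot.deriv]
  have hx2 := hx0 t
  have hy2 := hy0 t
  field_simp
  ring
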